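/- Let G be a finite group, k an algebraically closed field of characteristic not dividing |G|, and A an indecomposable semisimple G-algebra over k (an algebra in Rep(G) that is semisimple as a k-algebra). Then there is a subgroup H ≤ G, a minimal central idempotent e of A with stabilizer H, such that eAe is H-invariant, eAe ≅ End(V) for some projective representation V of H, and A ≅ Ind_H^G(eAe). -/

import Mathlib

/-- A minimal central idempotent of a ring. -/
def IsMinCentralIdem {A : Type*} [Ring A] (e : A) : Prop :=
  e ≠ 0 ∧ e * e = e ∧ e ∈ Subring.center A ∧
    ∀ f, f ∈ Subring.center A → f * f = f → f * e = f → f = 0 ∨ f = e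


lemma sq_zero_left_ideal {A : Type} [Ring A] [IsSemisimpleRing A]
    (L : Submodule A A) (hsq : ∀ a ∈ L, ∀ b ∈ L, a * b = 0) : ∀ a ∈ L, a = 0 := by
  intro a ha
  obtain ⟨L', hcL⟩ := exists_isCompl L
  set π := Submodule.projectionOnto L L' hcL with hπ
  have h2 : (π a : A) = a := by
    have := Submodule.linearProjOfIsCompl_apply_left hcL ⟨a, ha⟩
    rw [← hπ] at this
    exact congrArg Subtype.val this
  have h3 : π a = a • π 1 := by
    have : π (a • (1 : A)) = a • π 1 := map_smul π a 1
    rwa [smul_eq_mul, mul_one] at this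
  have h4 : a = a * (π 1 : A) := by
    conv_lhs => rw [← h2, h3]
    rw [Submodule.coe_smul, smul_eq_mul]
  rw [h4, hsq a ha _ (π 1).2]

lemma two_sided_central_idem {A : Type} [Ring A] [IsSemisimpleRing A]
    (J : Submodule A A) (hJ : ∀ a ∈ J, ∀ x : A, a * x ∈ J) :
    ∃ f, f ∈ J ∧ f * f = f ∧ (∀ a ∈ J, f * a = a ∧ a * f = a) ∧ (∀ x : A, f * x = x * f) := by
  obtain ⟨J', hc⟩ := exists_isCompl J
  set π := Submodule.projectionOnto J J' hc with hπ
  set f : A := (π 1 : A) with hf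
  have hfJ : f ∈ J := (π 1).2
  have hright : ∀ a ∈ J, a * f = a := by
    intro a ha
    have h2 : (π a : A) = a := by
      have := Submodule.linearProjOfIsCompl_apply_left hc ⟨a, ha⟩
      rw [← hπ] at this
      exact congrArg Subtype.val this
    have h3 : π a = a • π 1 := by
      have : π (a • (1 : A)) = a • π 1 := map_smul π a 1
      rwa [smul_eq_mul, mul_one] at this
    have h4 : a = a * f := by
      conv_lhs => rw [← h2, h3]
      rw [Submodule.coe_smul, smul_eq_mul, hf]
    exact h4.symm
  have hidem : f * f = f := hright f hfJ
  -- M := {a ∈ J | f * a = 0}; T := span of M; every element of J kills T from the left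
  set M : Set A := {a : A | a ∈ J ∧ f * a = 0} with hM
  set T := Submodule.span A M with hT
  have hTJ : T ≤ J := Submodule.span_le.mpr (fun a ha => ha.1)
  have hkill : ∀ s ∈ T, ∀ t ∈ J, t * s = 0 := by
    intro s hs
    induction hs using Submodule.span_induction with
    | mem m hm => intro t ht; rw [← hright t ht, mul_assoc, hm.2, mul_zero]
    | zero => intro t _; rw [mul_zero]
    | add x y _ _ ihx ihy => intro t ht; rw [mul_add, ihx t ht, ihy t ht, add_zero]
    | smul x s _ ihs =>
        intro t ht
        rw [smul_eq_mul, ← mul_assoc]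
        exact ihs (t * x) (hJ t ht x)
  have hM0 : ∀ a ∈ M, a = 0 := by
    intro a ha
    exact sq_zero_left_ideal T
      (fun x hx y hy => hkill y hy x (hTJ hx)) a (Submodule.subset_span ha)
  have hleft : ∀ a ∈ J, f * a = a := by
    intro a ha
    have hm : a - f * a ∈ M := by
      refine ⟨Submodule.sub_mem J ha (J.smul_mem f ha), ?_⟩
      rw [mul_sub, ← mul_assoc, hidem, sub_self]
    have h := hM0 _ hm
    rw [sub_eq_zero] at h
    exact h.symm
  refine ⟨f, hfJ, hidem, fun a ha => ⟨hleft a ha, hright a ha⟩, fun x => ?_⟩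
  have h6 : f * x ∈ J := hJ f hfJ x
  have h7 : x * f ∈ J := J.smul_mem x hfJ
  calc f * x = (f * x) * f := (hright _ h6).symm
    _ = f * (x * f) := by rw [mul_assoc]
    _ = x * f := hleft _ h7



lemma exists_minCentralIdem {k A : Type} [Field k] [Ring A] [Algebra k A]
    [FiniteDimensional k A] (hA : (1 : A) ≠ 0) : ∃ e : A, IsMinCentralIdem e := by
  classical
  set P : ℕ → Prop := fun d => ∃ g : A, g ≠ 0 ∧ g * g = g ∧ g ∈ Subring.center A ∧
    Module.finrank k (LinearMap.range (LinearMap.mulLeft k g)) = d with hP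
  have hex : ∃ d, P d := ⟨_, 1, hA, one_mul 1, Subring.one_mem _, rfl⟩
  obtain ⟨e, he0, hee, hec, hed⟩ := Nat.find_spec hex
  refine ⟨e, he0, hee, hec, ?_⟩
  intro f hfc hff hfe
  by_contra hcon
  push_neg at hcon
  obtain ⟨hf0, hfne⟩ := hcon
  have hef : e * f = f := by
    rw [Subring.mem_center_iff] at hfc
    rw [hfc e]; exact hfe
  have hle : LinearMap.range (LinearMap.mulLeft k f) ≤
      LinearMap.range (LinearMap.mulLeft k e) := by
    rintro y ⟨x, rfl⟩
    exact ⟨f * x, by simp only [LinearMap.mulLeft_apply, ← mul_assoc, hef]⟩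
  have hmem : e - f ∈ LinearMap.range (LinearMap.mulLeft k e) :=
    ⟨1 - f, by simp only [LinearMap.mulLeft_apply, mul_sub, mul_one, hef]⟩
  have hnotmem : e - f ∉ LinearMap.range (LinearMap.mulLeft k f) := by
    rintro ⟨x, hx⟩
    simp only [LinearMap.mulLeft_apply] at hx
    have h1 : f * (e - f) = 0 := by rw [mul_sub, hfe, hff, sub_self]
    have h2 : f * (e - f) = e - f := by rw [← hx, ← mul_assoc, hff]
    exact hfne (sub_eq_zero.mp (h2.symm.trans h1)).symm
  have hlt : LinearMap.range (LinearMap.mulLeft k f) <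
      LinearMap.range (LinearMap.mulLeft k e) :=
    lt_of_le_of_ne hle (fun h => hnotmem (h ▸ hmem))
  have hdlt : Module.finrank k (LinearMap.range (LinearMap.mulLeft k f)) <
      Nat.find hex := by
    rw [← hed]; exact Submodule.finrank_lt_finrank_of_lt hlt
  exact Nat.find_min hex hdlt ⟨f, hf0, hff, hfc, rfl⟩

lemma center_map {k A : Type} [Field k] [Ring A] [Algebra k A]
    (φ : A ≃ₐ[k] A) {c : A} (hc : c ∈ Subring.center A) : φ c ∈ Subring.center A := by
  rw [Subring.mem_center_iff] at hc ⊢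
  intro g
  calc g * φ c = φ (φ.symm g * c) := by rw [map_mul, AlgEquiv.apply_symm_apply]
    _ = φ (c * φ.symm g) := by rw [hc]
    _ = φ c * g := by rw [map_mul, AlgEquiv.apply_symm_apply]

lemma minCentralIdem_map {k A : Type} [Field k] [Ring A] [Algebra k A]
    (φ : A ≃ₐ[k] A) {e : A} (he : IsMinCentralIdem e) : IsMinCentralIdem (φ e) := by
  obtain ⟨he0, hee, hec, hmin⟩ := he
  refine ⟨fun h => he0 (by simpa using φ.injective (h.trans (map_zero φ).symm)),
    by rw [← map_mul, hee], center_map φ hec, ?_⟩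
  intro f hfc hff hfe
  have h1 : φ.symm f * e = φ.symm f := by
    have := congrArg φ.symm hfe
    rwa [map_mul, AlgEquiv.symm_apply_apply] at this
  rcases hmin (φ.symm f) (center_map φ.symm hfc)
      (by rw [← map_mul, hff]) h1 with h | h
  · left
    have := congrArg φ h
    rwa [AlgEquiv.apply_symm_apply, map_zero] at this
  · right
    have := congrArg φ h
    rwa [AlgEquiv.apply_symm_apply] at this

lemma minCentralIdem_orth {A : Type} [Ring A] {e e' : A}
    (he : IsMinCentralIdem e) (he' : IsMinCentralIdem e') (hne : e ≠ e') : e * e' = 0 := by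
  obtain ⟨he0, hee, hec, hmin⟩ := he
  obtain ⟨he0', hee', hec', hmin'⟩ := he'
  have hcomm : e' * e = e * e' := (Subring.mem_center_iff.mp hec' e).symm
  have hpc : e * e' ∈ Subring.center A := Subring.mul_mem _ hec hec'
  have hpp : (e * e') * (e * e') = e * e' := by
    calc (e * e') * (e * e') = e * ((e' * e) * e') := by rw [mul_assoc, mul_assoc]
      _ = e * ((e * e') * e') := by rw [hcomm]
      _ = (e * e) * (e' * e') := by rw [mul_assoc, ← mul_assoc, ← mul_assoc]
      _ = e * e' := by rw [hee, hee']
  have hpe : (e * e') * e = e * e' := by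
    calc (e * e') * e = e * (e' * e) := by rw [mul_assoc]
      _ = (e * e) * e' := by rw [hcomm, ← mul_assoc]
      _ = e * e' := by rw [hee]
  have hpe' : (e * e') * e' = e * e' := by rw [mul_assoc, hee']
  rcases hmin _ hpc hpp hpe with h | h
  · exact h
  · rcases hmin' _ hpc hpp hpe' with h2 | h2
    · exact h2
    · exact absurd (h.symm.trans h2) hne


lemma schur_scalar {k A : Type} [Field k] [IsAlgClosed k] [Ring A] [Algebra k A]
    [FiniteDimensional k A] (S : Submodule A A) (hs : IsSimpleModule A S)
    (φ : S →ₗ[A] S) : ∃ c : k, ∀ s : S, φ s = c • s := by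
  classical
  haveI := hs
  haveI : Nontrivial S := IsSimpleModule.nontrivial A S
  set f : S →ₗ[k] S := φ.restrictScalars k with hfdef
  haveI : Nontrivial (Module.End k S) := by
    obtain ⟨s, hs0⟩ := exists_ne (0 : S)
    exact ⟨1, 0, fun h => hs0 (by simpa using LinearMap.congr_fun h s)⟩
  have hint : IsIntegral k (f : Module.End k S) := Algebra.IsIntegral.isIntegral _
  set p := minpoly k (f : Module.End k S) with hpdef
  have hp0 : p ≠ 0 := minpoly.ne_zero hint
  have hdeg : 0 < p.natDegree := minpoly.natDegree_pos hint
  obtain ⟨c, hc⟩ := IsAlgClosed.exists_root p (by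
    intro h
    have := Polynomial.natDegree_eq_zero_iff_degree_le_zero.mpr h.le
    omega)
  refine ⟨c, fun s => ?_⟩
  set ξ : S →ₗ[A] S := φ - c • LinearMap.id with hξdef
  suffices hξ : ξ = 0 by
    have := LinearMap.congr_fun hξ s
    simpa [hξdef, sub_eq_zero] using this
  by_contra hξ0
  have hbij : Function.Bijective ξ := LinearMap.bijective_of_ne_zero hξ0
  obtain ⟨q, hq⟩ : (Polynomial.X - Polynomial.C c) ∣ p := Polynomial.dvd_iff_isRoot.mpr hc
  have hqne : q ≠ 0 := by
    rintro rfl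
    rw [mul_zero] at hq
    exact hp0 hq
  have haev : Polynomial.aeval f p = 0 := minpoly.aeval k f
  rw [hq, map_mul] at haev
  have hXC : Polynomial.aeval f (Polynomial.X - Polynomial.C c)
      = f - algebraMap k (Module.End k S) c := by
    simp [map_sub]
  rw [hXC] at haev
  have hq0 : Polynomial.aeval f q = 0 := by
    ext t
    have h1 := LinearMap.congr_fun haev t
    rw [Module.End.mul_apply, LinearMap.zero_apply] at h1
    have h2 : ξ ((Polynomial.aeval f q) t) = 0 := by
      rw [hξdef]
      simpa [Module.algebraMap_end_apply, hfdef] using h1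
    have h3 : ξ 0 = 0 := map_zero ξ
    simpa using hbij.1 (h2.trans h3.symm)
  have hle := minpoly.degree_le_of_ne_zero k (f : Module.End k S) hqne hq0
  have hnatle : p.natDegree ≤ q.natDegree := Polynomial.natDegree_le_natDegree hle
  have hnat : p.natDegree = 1 + q.natDegree := by
    rw [hq, Polynomial.natDegree_mul (Polynomial.X_sub_C_ne_zero c) hqne,
      Polynomial.natDegree_X_sub_C]
  omega

lemma density {k A : Type} [Field k] [IsAlgClosed k] [Ring A] [Algebra k A]
    [FiniteDimensional k A] [IsSemisimpleRing A]
    (S : Submodule A A) (hs : IsSimpleModule A S) (T : S →ₗ[k] S) :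
    ∃ x : A, ∀ s : S, (T s : A) = x * s := by
  classical
  haveI := hs
  set n := Module.finrank k S with hn
  set b := Module.finBasis k S with hb
  set V := Fin n → S with hV
  set β : V := fun i => b i with hβ
  set N : Submodule A V := Submodule.span A {β} with hN
  obtain ⟨C, hC⟩ := exists_isCompl N
  set π0 := Submodule.linearProjOfIsCompl N C hC with hπ0
  set π : V →ₗ[A] V := N.subtype ∘ₗ π0 with hπ
  -- entries of π are A-linear endomorphisms of S, hence scalars
  have hentry : ∀ i j : Fin n, ∃ c : k,
      ∀ s : S, (π (Pi.single j s)) i = c • s := by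
    intro i j
    set φij : S →ₗ[A] S := (LinearMap.proj i) ∘ₗ π ∘ₗ (LinearMap.single A (fun _ => S) j)
      with hφ
    obtain ⟨c, hc⟩ := schur_scalar (k := k) S hs φij
    exact ⟨c, fun s => hc s⟩
  choose c hc using hentry
  have hπdecomp : ∀ v : V, ∀ i, (π v) i = ∑ j, c i j • v j := by
    intro v i
    have hv : v = ∑ j, Pi.single j (v j) := by
      ext i'
      rw [Finset.sum_apply]
      simp [Pi.single_apply]
    conv_lhs => rw [hv]
    rw [map_sum]
    rw [Finset.sum_apply]
    exact Finset.sum_congr rfl fun j _ => hc i j (v j)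
  -- β ∈ N and π β = β
  have hβN : β ∈ N := Submodule.mem_span_singleton_self β
  have hπβ : π β = β := by
    have h4 : π0 β = ⟨β, hβN⟩ := by
      rw [hπ0]; exact Submodule.linearProjOfIsCompl_apply_left hC ⟨β, hβN⟩
    show (π0 β : V) = β
    rw [h4]
  -- the componentwise application of T commutes with π
  set Tv : V → V := fun v i => T (v i) with hTv
  have hcomm : π (Tv β) = Tv (π β) := by
    funext i
    have lhs1 : π (Tv β) i = ∑ j, c i j • T (β j) := hπdecomp (Tv β) i
    have rhs1 : Tv (π β) i = T (∑ j, c i j • β j) := by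
      show T ((π β) i) = _
      rw [hπdecomp]
    rw [lhs1, rhs1, map_sum]
    exact Finset.sum_congr rfl fun j _ => (map_smul T (c i j) (β j)).symm
  have hrange : ∀ v : V, π v ∈ N := fun v => (π0 v).2
  have hTvN : Tv β ∈ N := by
    have h5 : Tv β = π (Tv β) := by
      conv_lhs => rw [← hπβ]
      exact hcomm.symm
    rw [h5]
    exact hrange _
  rw [hN, Submodule.mem_span_singleton] at hTvN
  obtain ⟨x, hx⟩ := hTvN
  refine ⟨x, fun s => ?_⟩
  -- check on basis vectors
  have hbasis : ∀ i, T (b i) = x • (b i) := by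
    intro i
    have := congrFun hx i
    exact (this.symm : Tv β i = (x • β) i)
  -- extend by k-linearity
  set μ : S →ₗ[k] S :=
    { toFun := fun s => ⟨x * s, S.smul_mem x s.2⟩
      map_add' := fun s t => by ext; simp [mul_add]
      map_smul' := fun a s => by ext; simp [Algebra.mul_smul_comm] } with hμ
  have : T = μ := by
    refine b.ext fun i => ?_
    rw [hbasis i]
    ext
    simp [hμ]
  rw [this]
  rfl


open Matrix in
lemma commutant_scalar {k : Type} [Field k] {n : ℕ} (w : Matrix (Fin n) (Fin n) k)
    (h : ∀ X, w * X = X * w) : ∃ c : k, w = c • 1 := by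
  obtain ⟨r, hr⟩ := Matrix.mem_range_scalar_of_commute_single
    (M := w) (fun i j _ => (h (Matrix.single i j 1)).symm)
  refine ⟨r, ?_⟩
  rw [← hr]
  ext i j
  by_cases hij : i = j <;>
    simp [Matrix.scalar_apply, Matrix.diagonal_apply, Matrix.one_apply, hij]

open Matrix in
lemma matrix_transitive {k : Type} [Field k] {n : ℕ} {u : Fin n → k} (hu : u ≠ 0)
    (w : Fin n → k) : ∃ X : Matrix (Fin n) (Fin n) k, X *ᵥ u = w := by
  obtain ⟨i, hi⟩ : ∃ i, u i ≠ 0 := by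
    by_contra hcon
    push_neg at hcon
    exact hu (funext hcon)
  refine ⟨Matrix.vecMulVec w (Pi.single i (u i)⁻¹), ?_⟩
  funext a
  simp only [Matrix.mulVec, dotProduct, Matrix.vecMulVec_apply, Pi.single_apply]
  rw [Finset.sum_eq_single i]
  · field_simp; simp [hi]
  · intro b _ hb
    simp [hb]
  · simp

open Matrix in
lemma exists_conj {k : Type} [Field k] {n : ℕ} (hn : 0 < n)
    (α : Matrix (Fin n) (Fin n) k → Matrix (Fin n) (Fin n) k)
    (hadd : ∀ X Y, α (X + Y) = α X + α Y)
    (hsmul : ∀ (c : k) X, α (c • X) = c • α X)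
    (hmul : ∀ X Y, α (X * Y) = α X * α Y)
    (hone : α 1 = 1) :
    ∃ P, IsUnit P ∧ ∀ X, α X * P = P * X := by
  classical
  set i0 : Fin n := ⟨0, hn⟩
  set v : Fin n → k := Pi.single i0 1 with hv
  have hv0 : v ≠ 0 := by
    intro h
    have := congrFun h i0
    simp [hv] at this
  have hdich : ∀ P : Matrix (Fin n) (Fin n) k, (∀ X, α X * P = P * X) → P ≠ 0 → IsUnit P := by
    intro P hP hP0
    have hker : ∀ u, P *ᵥ u = 0 → u = 0 := by
      intro u hu
      by_contra hu0
      have hall : ∀ w, P *ᵥ w = 0 := by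
        intro w
        obtain ⟨X, hX⟩ := matrix_transitive hu0 w
        calc P *ᵥ w = P *ᵥ (X *ᵥ u) := by rw [hX]
          _ = (P * X) *ᵥ u := Matrix.mulVec_mulVec u P X
          _ = (α X * P) *ᵥ u := by rw [hP X]
          _ = α X *ᵥ (P *ᵥ u) := (Matrix.mulVec_mulVec u (α X) P).symm
          _ = 0 := by rw [hu, Matrix.mulVec_zero]
      exact hP0 (Matrix.toLin'.injective (LinearMap.ext fun w => by
        rw [Matrix.toLin'_apply]; simpa using hall w))
    set f := Matrix.toLin' P with hf
    have hinjf : Function.Injective f := by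
      rw [← LinearMap.ker_eq_bot, LinearMap.ker_eq_bot']
      intro u hu
      exact hker u (by rwa [hf, Matrix.toLin'_apply] at hu)
    have hsurf : Function.Surjective f := LinearMap.injective_iff_surjective.mp hinjf
    set e := LinearEquiv.ofBijective f ⟨hinjf, hsurf⟩ with he
    set Q := LinearMap.toMatrix' (e.symm : (Fin n → k) →ₗ[k] (Fin n → k)) with hQ
    have h1 : P * Q = 1 := by
      apply Matrix.toLin'.injective
      rw [Matrix.toLin'_mul, hQ, Matrix.toLin'_toMatrix', Matrix.toLin'_one]
      exact LinearMap.ext fun w => e.apply_symm_apply w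
    have h2 : Q * P = 1 := by
      apply Matrix.toLin'.injective
      rw [Matrix.toLin'_mul, hQ, Matrix.toLin'_toMatrix', Matrix.toLin'_one]
      exact LinearMap.ext fun w => e.symm_apply_apply w
    exact ⟨⟨P, Q, h1, h2⟩, rfl⟩
  have hvmv_add : ∀ (w w' u : Fin n → k),
      Matrix.vecMulVec (w + w') u = Matrix.vecMulVec w u + Matrix.vecMulVec w' u := by
    intro w w' u; ext a b; simp [Matrix.vecMulVec_apply, add_mul]
  have hvmv_smul : ∀ (c : k) (w u : Fin n → k),
      Matrix.vecMulVec (c • w) u = c • Matrix.vecMulVec w u := by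
    intro c w u; ext a b; simp [Matrix.vecMulVec_apply, mul_assoc]
  set F : Fin n → ((Fin n → k) →ₗ[k] (Fin n → k)) := fun j =>
    { toFun := fun w => α (Matrix.vecMulVec w (Pi.single j 1)) *ᵥ v
      map_add' := fun w w' => by
        show α (Matrix.vecMulVec (w + w') (Pi.single j 1)) *ᵥ v = _
        rw [hvmv_add, hadd, Matrix.add_mulVec]
      map_smul' := fun c w => by
        show α (Matrix.vecMulVec (c • w) (Pi.single j 1)) *ᵥ v = _
        rw [hvmv_smul, hsmul, Matrix.smul_mulVec]
        rfl } with hF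
  set Pm : Fin n → Matrix (Fin n) (Fin n) k := fun j => LinearMap.toMatrix' (F j) with hPm
  have hvmv_mul : ∀ (X : Matrix (Fin n) (Fin n) k) (w u : Fin n → k),
      Matrix.vecMulVec (X *ᵥ w) u = X * Matrix.vecMulVec w u := by
    intro X w u; ext a b
    simp [Matrix.vecMulVec_apply, Matrix.mulVec, dotProduct, Matrix.mul_apply,
      Finset.sum_mul, mul_assoc]
  have hinter : ∀ j X, α X * Pm j = Pm j * X := by
    intro j X
    apply Matrix.toLin'.injective
    have hPF : Matrix.toLin' (Pm j) = F j := by rw [hPm]; exact Matrix.toLin'_toMatrix' _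
    rw [Matrix.toLin'_mul, Matrix.toLin'_mul, hPF]
    refine LinearMap.ext fun w => ?_
    simp only [LinearMap.comp_apply, Matrix.toLin'_apply]
    show α X *ᵥ (F j w) = F j (X *ᵥ w)
    show α X *ᵥ (α (Matrix.vecMulVec w (Pi.single j (1:k))) *ᵥ v)
      = α (Matrix.vecMulVec (X *ᵥ w) (Pi.single j (1:k))) *ᵥ v
    rw [hvmv_mul, hmul, Matrix.mulVec_mulVec]
  have hsum1 : ∑ j : Fin n, Matrix.vecMulVec (Pi.single j (1:k)) (Pi.single j (1:k)) = 1 := by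
    ext a b
    rw [Matrix.sum_apply]
    by_cases hab : a = b
    · subst hab
      rw [Finset.sum_eq_single a]
      · simp [Matrix.vecMulVec_apply, Matrix.one_apply]
      · intro c _ hc; simp [Matrix.vecMulVec_apply, Pi.single_apply, hc.symm]
      · simp
    · rw [Finset.sum_eq_zero, Matrix.one_apply_ne hab]
      intro c _
      simp only [Matrix.vecMulVec_apply, Pi.single_apply]
      rcases eq_or_ne b c with rfl | hbc
      · simp [hab]
      · simp [hbc]
  have hnz : ∃ j, Pm j ≠ 0 := by
    by_contra hcon
    push_neg at hcon
    have hF0 : ∀ j, F j = 0 := by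
      intro j
      have hPF : Matrix.toLin' (Pm j) = F j := by rw [hPm]; exact Matrix.toLin'_toMatrix' _
      rw [hcon j] at hPF
      rw [← hPF]
      exact map_zero Matrix.toLin'
    have hvsum : v = 0 := by
      set mv : Matrix (Fin n) (Fin n) k →+ (Fin n → k) :=
        AddMonoidHom.mk' (fun M => M *ᵥ v) (fun M N => Matrix.add_mulVec M N v) with hmv
      set αh : Matrix (Fin n) (Fin n) k →+ Matrix (Fin n) (Fin n) k :=
        AddMonoidHom.mk' α hadd with hαh
      have h4 : ∀ j : Fin n, mv (αh (Matrix.vecMulVec (Pi.single j (1:k)) (Pi.single j 1)))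
          = F j (Pi.single j 1) := fun j => rfl
      calc v = 1 *ᵥ v := (Matrix.one_mulVec v).symm
        _ = mv (αh (∑ j : Fin n, Matrix.vecMulVec (Pi.single j (1:k)) (Pi.single j (1:k)))) := by
            rw [hsum1]; show 1 *ᵥ v = α 1 *ᵥ v; rw [hone]
        _ = ∑ j : Fin n, mv (αh (Matrix.vecMulVec (Pi.single j (1:k)) (Pi.single j (1:k)))) := by
            rw [map_sum, map_sum]
        _ = ∑ j : Fin n, F j (Pi.single j (1:k)) := Finset.sum_congr rfl fun j _ => h4 j
        _ = 0 := by simp [hF0]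
    exact hv0 hvsum
  obtain ⟨j, hj⟩ := hnz
  exact ⟨Pm j, hdich (Pm j) (hinter j) hj, hinter j⟩

/-- Theorem 2, structure part: let G be a finite group, k an algebraically
closed field with char k ∤ |G|, and A an indecomposable semisimple G-algebra over k
(no nontrivial G-invariant central idempotents).  Then there are a subgroup H ≤ G and a
minimal central idempotent e of A with stabilizer H, such that the corner eAe is
H-invariant, eAe is isomorphic to a matrix algebra End(V) on which H acts by conjugation
by a projective representation ρ, and A ≅ Ind_H^G(eAe) via a ↦ (g ↦ e (g⁻¹·a) e). -/
theorem indecomposable_G_algebra_structure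
    {k : Type} [Field k] [IsAlgClosed k]
    {G : Type} [Group G] [Fintype G] (hchar : (Fintype.card G : k) ≠ 0)
    {A : Type} [Ring A] [Algebra k A] [FiniteDimensional k A] [IsSemisimpleRing A]
    (σ : G →* (A ≃ₐ[k] A))
    (hindec : ∀ c, c ∈ Subring.center A → c * c = c → (∀ g, σ g c = c) →
      c = 0 ∨ c = 1) (hA : (1 : A) ≠ 0) :
    ∃ (H : Subgroup G) (e : A), IsMinCentralIdem e ∧
      (∀ g, g ∈ H ↔ σ g e = e) ∧
      -- the corner eAe is H-invariant
      (∀ h ∈ H, ∀ a, σ h (e * a * e) = e * (σ h a) * e) ∧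
      -- eAe ≅ End(V) = M_n(k), with the H-action given by conjugation by a
      -- projective representation ρ of H
      (∃ (n : ℕ) (ψ : A → Matrix (Fin n) (Fin n) k),
        0 < n ∧
        (∀ x y, ψ (x + y) = ψ x + ψ y) ∧
        (∀ (c : k) x, ψ (c • x) = c • ψ x) ∧
        (∀ x, ψ x = ψ (e * x * e)) ∧
        ψ e = 1 ∧
        (∀ x y, ψ (e * x * e) * ψ (e * y * e) = ψ ((e * x * e) * (e * y * e))) ∧
        (∀ x, ψ (e * x * e) = 0 → e * x * e = 0) ∧
        (∀ T : Matrix (Fin n) (Fin n) k, ∃ x, ψ (e * x * e) = T) ∧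
        (∃ ρ : H → Matrix (Fin n) (Fin n) k,
          (∀ h, IsUnit (ρ h)) ∧
          (∀ h₁ h₂ : H, ∃ c : k, c ≠ 0 ∧ ρ (h₁ * h₂) = c • (ρ h₁ * ρ h₂)) ∧
          (∀ (h : H) (x : A), ψ (σ h (e * x * e)) * ρ h = ρ h * ψ (e * x * e)))) ∧
      -- A ≅ Ind_H^G(eAe) via Φ a g = e (g⁻¹ · a) e, G-equivariantly
      (Function.Injective (fun a : A => fun g : G => e * (σ g⁻¹ a) * e) ∧
        (∀ a b : A, (fun g : G => e * (σ g⁻¹ (a + b)) * e) =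
          (fun g => e * (σ g⁻¹ a) * e) + fun g => e * (σ g⁻¹ b) * e) ∧
        (∀ a b : A, (fun g : G => e * (σ g⁻¹ (a * b)) * e) =
          (fun g => e * (σ g⁻¹ a) * e) * fun g => e * (σ g⁻¹ b) * e) ∧
        (∀ (g : G) (a : A) (x : G), e * (σ x⁻¹ (σ g a)) * e = e * (σ (g⁻¹ * x)⁻¹ a) * e) ∧
        Set.range (fun a : A => fun g : G => e * (σ g⁻¹ a) * e) =
          {f : G → A | (∀ g, f g = e * f g * e) ∧
            ∀ (g h : G), h ∈ H → f (g * h) = σ h⁻¹ (f g)}) := by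
  classical
  obtain ⟨e, he⟩ := exists_minCentralIdem (k := k) hA
  obtain ⟨he0, hee, hec, hmin⟩ := he
  have hecomm : ∀ b : A, b * e = e * b := Subring.mem_center_iff.mp hec
  have hσmul : ∀ (g₁ g₂ : G) (x : A), σ (g₁ * g₂) x = σ g₁ (σ g₂ x) := by
    intro g₁ g₂ x; rw [map_mul]; rfl
  have hσ1 : ∀ x : A, σ 1 x = x := by intro x; rw [map_one]; rfl
  have hσinv : ∀ (g : G) (x : A), σ g (σ g⁻¹ x) = x := by
    intro g x
    rw [← hσmul, mul_inv_cancel, hσ1]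
  have hσinv' : ∀ (g : G) (x : A), σ g⁻¹ (σ g x) = x := by
    intro g x
    rw [← hσmul, inv_mul_cancel, hσ1]
  -- the subgroup
  set Hgrp : Subgroup G :=
    { carrier := {g : G | σ g e = e}
      one_mem' := hσ1 e
      mul_mem' := by
        intro a b ha hb
        show σ (a * b) e = e
        rw [hσmul, hb, ha]
      inv_mem' := by
        intro a ha
        show σ a⁻¹ e = e
        conv_lhs => rw [← ha]
        exact hσinv' a e } with hHgrp
  have hHmem : ∀ g : G, g ∈ Hgrp ↔ σ g e = e := fun g => Iff.rfl
  -- corner invariance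
  have hcorner : ∀ h ∈ Hgrp, ∀ a, σ h (e * a * e) = e * (σ h a) * e := by
    intro h hh a
    rw [map_mul, map_mul, (hHmem h).mp hh]
  -- orthogonality of distinct idempotents in the orbit
  have horth : ∀ g : G, σ g e ≠ e → e * σ g e = 0 := by
    intro g hne
    exact minCentralIdem_orth ⟨he0, hee, hec, hmin⟩
      (minCentralIdem_map (σ g) ⟨he0, hee, hec, hmin⟩) (fun h => hne h.symm)
  -- basic corner identities
  have heu : ∀ u : A, (e * u) * e = e * u := by
    intro u; rw [mul_assoc, hecomm u, ← mul_assoc, hee]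
  have hl : ∀ x : A, e * (e * x * e) = e * x * e := by
    intro x; rw [← mul_assoc, ← mul_assoc, hee]
  have hsand : ∀ x : A, e * (e * x * e) * e = e * x * e := by
    intro x
    rw [hl, mul_assoc, hee]
  have hmulcorner : ∀ u v : A, (e * u * e) * (e * v * e) = e * (u * v) * e := by
    intro u v
    calc (e * u * e) * (e * v * e) = (e * u) * (e * (e * v * e)) := by rw [mul_assoc]
      _ = (e * u) * (e * v * e) := by rw [hl]
      _ = ((e * u) * (e * v)) * e := by rw [← mul_assoc]
      _ = (((e * u) * e) * v) * e := by rw [← mul_assoc (e * u) e v]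
      _ = ((e * u) * v) * e := by rw [heu]
      _ = e * (u * v) * e := by rw [mul_assoc e u v]
  -- the simple module in the block of e
  set Ie : Submodule A A :=
    { carrier := {a : A | a * e = a}
      add_mem' := fun {a b} ha hb => by
        show (a + b) * e = a + b
        rw [add_mul, ha, hb]
      zero_mem' := zero_mul e
      smul_mem' := fun x a ha => by
        show (x * a) * e = x * a
        rw [mul_assoc, ha] } with hIe
  have hIemem : ∀ a : A, a ∈ Ie ↔ a * e = a := fun a => Iff.rfl
  have heIe : e ∈ Ie := hee
  obtain ⟨S, hSle, hs⟩ : ∃ S ≤ Ie, IsSimpleModule A S := by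
    rcases IsSemisimpleModule.eq_bot_or_exists_simple_le Ie with h | h
    · exact absurd ((hIemem e).mpr hee) (by rw [h]; simpa using he0)
    · exact h
  haveI := hs
  haveI : Nontrivial S := IsSimpleModule.nontrivial A S
  have hse : ∀ s : A, s ∈ S → s * e = s := fun s h => hSle h
  have hes : ∀ s : A, s ∈ S → e * s = s := fun s h => by rw [← hecomm s, hse s h]
  -- faithfulness of the block action on S
  have hfaith : ∀ y : A, y * e = y → (∀ s ∈ S, y * s = 0) → y = 0 := by
    intro y hye hys
    set J : Submodule A A :=
      { carrier := {a : A | a * e = a ∧ ∀ s ∈ S, a * s = 0}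
        add_mem' := fun {a b} ha hb => ⟨by rw [add_mul, ha.1, hb.1], fun s hsmem => by
          rw [add_mul, ha.2 s hsmem, hb.2 s hsmem, add_zero]⟩
        zero_mem' := ⟨zero_mul e, fun s _ => zero_mul s⟩
        smul_mem' := fun x a ha => ⟨by show (x * a) * e = x * a; rw [mul_assoc, ha.1],
          fun s hsmem => by show (x * a) * s = 0; rw [mul_assoc, ha.2 s hsmem, mul_zero]⟩ }
      with hJ
    have hJr : ∀ a ∈ J, ∀ x : A, a * x ∈ J := by
      intro a ha x
      refine ⟨?_, ?_⟩
      · show (a * x) * e = a * x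
        rw [mul_assoc, hecomm x, ← mul_assoc, ha.1]
      · intro s hsmem
        show (a * x) * s = 0
        rw [mul_assoc]
        exact ha.2 (x * s) (S.smul_mem x hsmem)
    obtain ⟨f, hfJ, hff, hfid, hfc⟩ := two_sided_central_idem J hJr
    have hfe : f * e = f := hfJ.1
    rcases hmin f (Subring.mem_center_iff.mpr (fun g => (hfc g).symm)) hff hfe with h0 | h1
    · have := (hfid y ⟨hye, hys⟩).1
      rw [h0, zero_mul] at this
      exact this.symm
    · exfalso
      obtain ⟨s, hsmem, hs0⟩ := (Submodule.ne_bot_iff S).mp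
        (by exact (isSimpleModule_iff_isAtom.mp hs).1)
      have h2 : e * s = 0 := h1 ▸ hfJ.2 s hsmem
      exact hs0 (by rw [← hes s hsmem, h2])
  -- the matrix realization
  set n := Module.finrank k S with hn
  have hn0 : 0 < n := Module.finrank_pos
  set bS : Module.Basis (Fin n) k S := Module.finBasis k S with hbS
  set μ : A → (S →ₗ[k] S) := fun y =>
    { toFun := fun s => ⟨y * (s : A), S.smul_mem y s.2⟩
      map_add' := fun s t => by ext; simp [mul_add]
      map_smul' := fun c s => by ext; simp [Algebra.mul_smul_comm] } with hμ
  have hμapp : ∀ (y : A) (s : S), ((μ y s : A)) = y * (s : A) := fun y s => rfl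
  have hμadd : ∀ y z, μ (y + z) = μ y + μ z := by
    intro y z; ext s; simp [hμ, add_mul]
  have hμsmul : ∀ (c : k) (y : A), μ (c • y) = c • μ y := by
    intro c y; ext s; simp [hμ, smul_mul_assoc]
  have hμmul : ∀ y z, μ (y * z) = (μ y) ∘ₗ (μ z) := by
    intro y z; ext s; simp [hμ, mul_assoc]
  have hμe : μ e = LinearMap.id := by
    ext s
    simp only [hμ, LinearMap.coe_mk, AddHom.coe_mk, LinearMap.id_coe, id_eq]
    exact hes (s : A) s.2
  set ψ : A → Matrix (Fin n) (Fin n) k := fun x =>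
    LinearMap.toMatrix bS bS (μ (e * x * e)) with hψ
  have hψadd : ∀ x y, ψ (x + y) = ψ x + ψ y := by
    intro x y
    have h1 : e * (x + y) * e = e * x * e + e * y * e := by rw [mul_add, add_mul]
    rw [hψ]
    show LinearMap.toMatrix bS bS (μ (e * (x + y) * e)) = _
    rw [h1, hμadd, map_add]
  have hψsmul : ∀ (c : k) x, ψ (c • x) = c • ψ x := by
    intro c x
    have h1 : e * (c • x) * e = c • (e * x * e) := by
      rw [mul_smul_comm, smul_mul_assoc]
    show LinearMap.toMatrix bS bS (μ (e * (c • x) * e)) = _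
    rw [h1, hμsmul, map_smul]
  have hψcorner : ∀ x, ψ x = ψ (e * x * e) := by
    intro x
    show LinearMap.toMatrix bS bS (μ (e * x * e)) =
      LinearMap.toMatrix bS bS (μ (e * (e * x * e) * e))
    rw [hsand]
  have hψe : ψ e = 1 := by
    show LinearMap.toMatrix bS bS (μ (e * e * e)) = 1
    rw [hee, hee, hμe, LinearMap.toMatrix_id]
  have hψmul : ∀ x y, ψ (e * x * e) * ψ (e * y * e) = ψ ((e * x * e) * (e * y * e)) := by
    intro x y
    show (LinearMap.toMatrix bS bS (μ (e * (e * x * e) * e))) *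
        (LinearMap.toMatrix bS bS (μ (e * (e * y * e) * e)))
      = LinearMap.toMatrix bS bS (μ (e * ((e * x * e) * (e * y * e)) * e))
    rw [hsand, hsand, hmulcorner x y, hsand, ← LinearMap.toMatrix_comp bS bS bS, ← hμmul,
      hmulcorner x y]
  have hψinj : ∀ x, ψ (e * x * e) = 0 → e * x * e = 0 := by
    intro x hx
    have h1 : μ (e * x * e) = 0 := by
      have h2 : LinearMap.toMatrix bS bS (μ (e * (e * x * e) * e)) = 0 := hx
      rw [hsand] at h2
      exact (LinearMap.toMatrix bS bS).map_eq_zero_iff.mp h2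
    apply hfaith (e * x * e) (by rw [mul_assoc, hee])
    intro s hsmem
    have := congrArg (Subtype.val) (LinearMap.congr_fun h1 ⟨s, hsmem⟩)
    simpa [hμapp] using this
  have hψsurj : ∀ T : Matrix (Fin n) (Fin n) k, ∃ x, ψ (e * x * e) = T := by
    intro T
    obtain ⟨x, hx⟩ := density (k := k) S hs (Matrix.toLin bS bS T)
    refine ⟨x, ?_⟩
    have hμx : μ (e * x * e) = Matrix.toLin bS bS T := by
      ext s
      show ((e * x * e) * (s : A) : A) = _
      have hxs : x * (s : A) ∈ S := S.smul_mem x s.2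
      have h3 : (e * x * e) * (s : A) = x * (s : A) := by
        calc (e * x * e) * (s : A) = (e * x) * (e * (s : A)) := by rw [mul_assoc]
          _ = (e * x) * (s : A) := by rw [hes _ s.2]
          _ = e * (x * (s : A)) := by rw [mul_assoc]
          _ = x * (s : A) := hes _ hxs
      rw [h3, ← hx]
    show LinearMap.toMatrix bS bS (μ (e * (e * x * e) * e)) = T
    rw [hsand, hμx, LinearMap.toMatrix_toLin]
  -- injectivity on the corner
  set Ψ : A →+ Matrix (Fin n) (Fin n) k := AddMonoidHom.mk' ψ hψadd with hΨ
  have hΨapp : ∀ x, Ψ x = ψ x := fun _ => rfl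
  have hinj' : ∀ x y : A, ψ (e * x * e) = ψ (e * y * e) → e * x * e = e * y * e := by
    intro x y hxy
    have h2 : ψ (e * (x - y) * e) = 0 := by
      rw [← hψcorner, ← hΨapp, map_sub Ψ x y, hΨapp, hΨapp, hψcorner x, hψcorner y, hxy,
        sub_self]
    have h3 := hψinj (x - y) h2
    rw [mul_sub, sub_mul, sub_eq_zero] at h3
    exact h3
  choose xc hxc using hψsurj
  set Θ : Hgrp → Matrix (Fin n) (Fin n) k → Matrix (Fin n) (Fin n) k :=
    fun h T => ψ (σ (h : G) (e * xc T * e)) with hΘ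
  have hθ : ∀ (h : Hgrp) (x : A), Θ h (ψ (e * x * e)) = ψ (σ (h : G) (e * x * e)) := by
    intro h x
    have h1 : e * xc (ψ (e * x * e)) * e = e * x * e := hinj' _ _ (hxc _)
    show ψ (σ (h : G) (e * xc (ψ (e * x * e)) * e)) = _
    rw [h1]
  have hΘadd : ∀ (h : Hgrp) X Y, Θ h (X + Y) = Θ h X + Θ h Y := by
    intro h X Y
    have h1 : e * xc (X + Y) * e = e * xc X * e + e * xc Y * e := by
      have h2 : e * (xc X + xc Y) * e = e * xc X * e + e * xc Y * e := by
        rw [mul_add, add_mul]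
      rw [← h2]
      refine hinj' _ _ ?_
      rw [hxc, ← hψcorner, hψadd, hψcorner (xc X), hψcorner (xc Y), hxc, hxc]
    show ψ (σ (h : G) (e * xc (X + Y) * e)) = ψ (σ (h : G) (e * xc X * e))
      + ψ (σ (h : G) (e * xc Y * e))
    rw [h1, map_add, hψadd]
  have hΘsmul : ∀ (h : Hgrp) (c : k) X, Θ h (c • X) = c • Θ h X := by
    intro h c X
    have h1 : e * xc (c • X) * e = c • (e * xc X * e) := by
      have h2 : e * (c • xc X) * e = c • (e * xc X * e) := by
        rw [mul_smul_comm, smul_mul_assoc]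
      rw [← h2]
      refine hinj' _ _ ?_
      rw [hxc, ← hψcorner, hψsmul, hψcorner (xc X), hxc]
    show ψ (σ (h : G) (e * xc (c • X) * e)) = c • ψ (σ (h : G) (e * xc X * e))
    rw [h1, map_smul, hψsmul]
  have hΘmul : ∀ (h : Hgrp) X Y, Θ h (X * Y) = Θ h X * Θ h Y := by
    intro h X Y
    have h1 : e * xc (X * Y) * e = (e * xc X * e) * (e * xc Y * e) := by
      refine hinj' _ _ ?_ |>.trans (hmulcorner _ _).symm
      rw [hxc, ← hmulcorner, ← hψmul, hxc, hxc]
    show ψ (σ (h : G) (e * xc (X * Y) * e)) = ψ (σ (h : G) (e * xc X * e))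
      * ψ (σ (h : G) (e * xc Y * e))
    rw [h1, map_mul, hcorner _ h.2 (xc X), hcorner _ h.2 (xc Y)]
    exact (hψmul _ _).symm
  have hΘone : ∀ h : Hgrp, Θ h 1 = 1 := by
    intro h
    have h1 : e * xc 1 * e = e := by
      have h2 : e * xc 1 * e = e * e * e := by
        refine hinj' _ _ ?_
        rw [hxc, ← hψcorner, hψe]
      rw [h2, hee, hee]
    show ψ (σ (h : G) (e * xc 1 * e)) = 1
    rw [h1, (hHmem _).mp h.2, hψe]
  have hρex : ∀ h : Hgrp, ∃ P, IsUnit P ∧ ∀ X, Θ h X * P = P * X :=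
    fun h => exists_conj hn0 (Θ h) (hΘadd h) (hΘsmul h) (hΘmul h) (hΘone h)
  choose ρ hρu hρi using hρex
  have hρint : ∀ (h : Hgrp) (x : A), ψ (σ (h : G) (e * x * e)) * ρ h = ρ h * ψ (e * x * e) := by
    intro h x
    rw [← hθ]
    exact hρi h (ψ (e * x * e))
  have hΘsurj : ∀ (h : Hgrp) (U : Matrix (Fin n) (Fin n) k), ∃ T, Θ h T = U := by
    intro h U
    refine ⟨ψ (e * σ ((h : G))⁻¹ (xc U) * e), ?_⟩
    have h1 : e * xc (ψ (e * σ ((h : G))⁻¹ (xc U) * e)) * e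
        = e * σ ((h : G))⁻¹ (xc U) * e := hinj' _ _ (hxc _)
    show ψ (σ (h : G) (e * xc (ψ (e * σ ((h : G))⁻¹ (xc U) * e)) * e)) = U
    rw [h1, hcorner _ h.2, hσinv]
    exact hxc U
  have hΘcomp : ∀ (h₁ h₂ : Hgrp) X, Θ (h₁ * h₂) X = Θ h₁ (Θ h₂ X) := by
    intro h₁ h₂ X
    have h1 : σ ((h₂ : G)) (e * xc X * e) = e * σ (h₂ : G) (xc X) * e := hcorner _ h₂.2 _
    have h2 : Θ h₂ X = ψ (e * σ (h₂ : G) (xc X) * e) := by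
      show ψ (σ (h₂ : G) (e * xc X * e)) = _
      rw [h1]
    rw [h2, hθ h₁]
    show ψ (σ ((h₁ * h₂ : Hgrp) : G) (e * xc X * e))
      = ψ (σ (h₁ : G) (e * σ (h₂ : G) (xc X) * e))
    rw [← h1, ← hσmul]
    rfl
  haveI : Nonempty (Fin n) := ⟨⟨0, hn0⟩⟩
  have hcoc : ∀ h₁ h₂ : Hgrp, ∃ c : k, c ≠ 0 ∧ ρ (h₁ * h₂) = c • (ρ h₁ * ρ h₂) := by
    intro h₁ h₂
    set b : Matrix (Fin n) (Fin n) k := ρ h₁ * ρ h₂ with hb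
    have hbu : IsUnit b := (hρu h₁).mul (hρu h₂)
    set V : Matrix (Fin n) (Fin n) k := ((hbu.unit⁻¹ : (Matrix (Fin n) (Fin n) k)ˣ) : Matrix (Fin n) (Fin n) k) with hV
    have hbV : b * V = 1 := hbu.mul_val_inv
    have hVb : V * b = 1 := hbu.val_inv_mul
    set a : Matrix (Fin n) (Fin n) k := ρ (h₁ * h₂) with haa
    set W : Matrix (Fin n) (Fin n) k := a * V with hWdef
    have hWu : IsUnit W := (hρu (h₁ * h₂)).mul (hbu.unit⁻¹).isUnit
    have hWcomm : ∀ Y, W * Y = Y * W := by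
      intro Y
      obtain ⟨X, hX⟩ := hΘsurj (h₁ * h₂) Y
      have i1 : Y * a = a * X := by rw [← hX, haa]; exact hρi (h₁ * h₂) X
      have i2 : Y * b = b * X := by
        rw [← hX, hΘcomp, hb]
        calc Θ h₁ (Θ h₂ X) * (ρ h₁ * ρ h₂) = (Θ h₁ (Θ h₂ X) * ρ h₁) * ρ h₂ := by
              rw [mul_assoc]
          _ = (ρ h₁ * Θ h₂ X) * ρ h₂ := by rw [hρi h₁ (Θ h₂ X)]
          _ = ρ h₁ * (Θ h₂ X * ρ h₂) := by rw [mul_assoc]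
          _ = ρ h₁ * (ρ h₂ * X) := by rw [hρi h₂ X]
          _ = (ρ h₁ * ρ h₂) * X := by rw [← mul_assoc]
      have i3 : V * Y = X * V := by
        calc V * Y = (V * Y) * (b * V) := by rw [hbV, mul_one]
          _ = V * (Y * b) * V := by rw [← mul_assoc, mul_assoc V Y b]
          _ = V * (b * X) * V := by rw [i2]
          _ = (V * b) * (X * V) := by rw [← mul_assoc, mul_assoc (V * b) X V]
          _ = X * V := by rw [hVb, one_mul]
      calc W * Y = a * (V * Y) := by rw [hWdef, mul_assoc]
        _ = a * (X * V) := by rw [i3]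
        _ = (a * X) * V := by rw [mul_assoc]
        _ = (Y * a) * V := by rw [i1]
        _ = Y * W := by rw [hWdef, mul_assoc]
    obtain ⟨c, hcW⟩ := commutant_scalar W hWcomm
    have hc0 : c ≠ 0 := by
      intro h0
      rw [h0, zero_smul] at hcW
      exact hWu.ne_zero hcW
    refine ⟨c, hc0, ?_⟩
    calc ρ (h₁ * h₂) = a * (V * b) := by rw [hVb, mul_one, haa]
      _ = W * b := by rw [hWdef, mul_assoc]
      _ = (c • 1) * b := by rw [← hcW]
      _ = c • (ρ h₁ * ρ h₂) := by rw [smul_mul_assoc, one_mul, hb]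
  -- the orbit of e and the sum over it
  set O : Finset A := Finset.image (fun g : G => σ g e) Finset.univ with hO
  have heO : e ∈ O := Finset.mem_image.mpr ⟨1, Finset.mem_univ 1, hσ1 e⟩
  have hOidem : ∀ f ∈ O, f * f = f := by
    intro f hf
    obtain ⟨g, _, rfl⟩ := Finset.mem_image.mp hf
    rw [← map_mul, hee]
  have hOcent : ∀ f ∈ O, f ∈ Subring.center A := by
    intro f hf
    obtain ⟨g, _, rfl⟩ := Finset.mem_image.mp hf
    exact center_map (σ g) hec
  have hOorth : ∀ f ∈ O, ∀ f' ∈ O, f ≠ f' → f * f' = 0 := by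
    intro f hf f' hf' hne
    obtain ⟨g, _, rfl⟩ := Finset.mem_image.mp hf
    obtain ⟨g', _, rfl⟩ := Finset.mem_image.mp hf'
    have h1 : σ g' e = σ g (σ (g⁻¹ * g') e) := by rw [← hσmul, mul_inv_cancel_left]
    have h2 : σ (g⁻¹ * g') e ≠ e := by
      intro hcon
      apply hne
      rw [h1, hcon]
    rw [h1, ← map_mul, horth _ h2, map_zero]
  set sO : A := ∑ f ∈ O, f with hsO
  have hsc : sO ∈ Subring.center A := Subring.sum_mem _ (fun f hf => hOcent f hf)
  have hss : sO * sO = sO := by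
    rw [hsO, Finset.sum_mul_sum]
    refine Finset.sum_congr rfl fun f hf => ?_
    rw [Finset.sum_eq_single f (fun f' hf' hne => hOorth f hf f' hf' (Ne.symm hne))
      (fun h => absurd hf h)]
    exact hOidem f hf
  have hsinv : ∀ g : G, σ g sO = sO := by
    intro g
    rw [hsO, map_sum]
    refine Finset.sum_nbij' (fun f => σ g f) (fun f => σ g⁻¹ f) ?_ ?_ ?_ ?_ ?_
    · intro f hf
      obtain ⟨x, _, rfl⟩ := Finset.mem_image.mp hf
      exact Finset.mem_image.mpr ⟨g * x, Finset.mem_univ _, (hσmul g x e).symm ▸ rfl⟩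
    · intro f hf
      obtain ⟨x, _, rfl⟩ := Finset.mem_image.mp hf
      exact Finset.mem_image.mpr ⟨g⁻¹ * x, Finset.mem_univ _, (hσmul g⁻¹ x e).symm ▸ rfl⟩
    · intro f _
      exact hσinv' g f
    · intro f _
      exact hσinv g f
    · intro f _
      rfl
  have hsOe : sO * e = e := by
    rw [hsO, Finset.sum_mul]
    rw [Finset.sum_eq_single e (fun f hf hne => hOorth f hf e heO hne)
      (fun h => absurd heO h)]
    exact hee
  have hs1 : sO = 1 := by
    rcases hindec sO hsc hss hsinv with h | h
    · exact absurd (by rw [← hsOe, h, zero_mul]) he0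
    · exact h
  have hdecomp : ∀ a : A, a = ∑ f ∈ O, f * a * f := by
    intro a
    conv_lhs => rw [← one_mul a, ← hs1, hsO]
    rw [Finset.sum_mul]
    refine Finset.sum_congr rfl fun f hf => ?_
    have hcf : a * f = f * a := Subring.mem_center_iff.mp (hOcent f hf) a
    rw [mul_assoc, hcf, ← mul_assoc, hOidem f hf]
  have hcardH : (Fintype.card Hgrp : k) ≠ 0 := by
    obtain ⟨m, hm⟩ := Subgroup.card_subgroup_dvd_card Hgrp
    rw [Nat.card_eq_fintype_card, Nat.card_eq_fintype_card] at hm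
    intro h0
    apply hchar
    rw [hm]
    push_cast
    rw [h0, zero_mul]
  have hinjΦ : Function.Injective (fun a : A => fun g : G => e * (σ g⁻¹ a) * e) := by
    intro a b hab
    have hab' : ∀ g : G, e * σ g⁻¹ a * e = e * σ g⁻¹ b * e := fun g => congrFun hab g
    have hfab : ∀ f ∈ O, f * a * f = f * b * f := by
      intro f hf
      obtain ⟨g, _, rfl⟩ := Finset.mem_image.mp hf
      have h1 := congrArg (σ g) (hab' g)
      rwa [map_mul, map_mul, map_mul, map_mul, hσinv, hσinv] at h1
    rw [hdecomp a, hdecomp b]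
    exact Finset.sum_congr rfl fun f hf => hfab f hf
  have hrange : Set.range (fun a : A => fun g : G => e * (σ g⁻¹ a) * e) =
      {f : G → A | (∀ g, f g = e * f g * e) ∧
        ∀ (g h : G), h ∈ Hgrp → f (g * h) = σ h⁻¹ (f g)} := by
    ext f
    constructor
    · rintro ⟨a, rfl⟩
      constructor
      · intro g
        exact (hsand (σ g⁻¹ a)).symm
      · intro g h hh
        have h1 : σ h⁻¹ (e * σ g⁻¹ a * e) = e * σ h⁻¹ (σ g⁻¹ a) * e :=
          hcorner h⁻¹ (Hgrp.inv_mem hh) _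
        show e * σ (g * h)⁻¹ a * e = σ h⁻¹ (e * σ g⁻¹ a * e)
        rw [h1, ← hσmul, mul_inv_rev]
    · rintro ⟨hf1, hf2⟩
      refine ⟨(Fintype.card Hgrp : k)⁻¹ • ∑ g : G, σ g (f g), funext fun x => ?_⟩
      show e * σ x⁻¹ ((Fintype.card Hgrp : k)⁻¹ • ∑ g : G, σ g (f g)) * e = f x
      rw [map_smul, map_sum, mul_smul_comm, smul_mul_assoc, Finset.mul_sum, Finset.sum_mul]
      have hterm : ∀ g : G, e * σ x⁻¹ (σ g (f g)) * e
          = if x⁻¹ * g ∈ Hgrp then f x else 0 := by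
        intro g
        rw [← hσmul]
        by_cases hmem2 : x⁻¹ * g ∈ Hgrp
        · rw [if_pos hmem2]
          have h2 : f g = σ (x⁻¹ * g)⁻¹ (f x) := by
            conv_lhs => rw [← mul_inv_cancel_left x g]
            exact hf2 x (x⁻¹ * g) hmem2
          rw [h2, hσinv]
          exact (hf1 x).symm
        · rw [if_neg hmem2]
          have hqe : e * σ (x⁻¹ * g) e = 0 :=
            horth _ (fun hcon => hmem2 ((hHmem _).mpr hcon))
          have h3 : σ (x⁻¹ * g) (f g)
              = σ (x⁻¹ * g) e * σ (x⁻¹ * g) (f g) * σ (x⁻¹ * g) e := by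
            conv_lhs => rw [hf1 g]
            rw [map_mul, map_mul]
          rw [h3, ← mul_assoc, ← mul_assoc, hqe, zero_mul, zero_mul, zero_mul]
      have h4 : ∑ g : G, e * σ x⁻¹ (σ g (f g)) * e
          = ∑ g : G, if x⁻¹ * g ∈ Hgrp then f x else 0 :=
        Finset.sum_congr rfl fun g _ => hterm g
      have hcard : (Finset.filter (fun g => x⁻¹ * g ∈ Hgrp) Finset.univ).card
          = Fintype.card Hgrp := by
        have h5 : Fintype.card Hgrp
            = (Finset.filter (fun g => g ∈ Hgrp) Finset.univ).card :=
          Fintype.card_subtype _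
        rw [h5]
        refine Finset.card_nbij' (fun g => x⁻¹ * g) (fun h => x * h) ?_ ?_ ?_ ?_
        · intro g hg
          simp only [Finset.mem_coe, Finset.mem_filter, Finset.mem_univ, true_and] at hg ⊢
          exact hg
        · intro h hh
          simp only [Finset.mem_coe, Finset.mem_filter, Finset.mem_univ, true_and] at hh ⊢
          rwa [inv_mul_cancel_left]
        · intro g _
          exact mul_inv_cancel_left x g
        · intro h _
          exact inv_mul_cancel_left x h
      rw [h4, Finset.sum_ite, Finset.sum_const, Finset.sum_const_zero, add_zero, hcard,
        ← Nat.cast_smul_eq_nsmul k, smul_smul, inv_mul_cancel₀ hcardH, one_smul]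
  refine ⟨Hgrp, e, ⟨he0, hee, hec, hmin⟩, fun g => Iff.rfl, hcorner,
    ⟨n, ψ, hn0, hψadd, hψsmul, hψcorner, hψe, hψmul, hψinj,
      fun T => ⟨xc T, hxc T⟩, ρ, hρu, hcoc, hρint⟩,
    hinjΦ, ?_, ?_, ?_, hrange⟩
  · intro a b
    funext g
    show e * σ g⁻¹ (a + b) * e = e * σ g⁻¹ a * e + e * σ g⁻¹ b * e
    rw [map_add, mul_add, add_mul]
  · intro a b
    funext g
    show e * σ g⁻¹ (a * b) * e = (e * σ g⁻¹ a * e) * (e * σ g⁻¹ b * e)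
    rw [map_mul, hmulcorner]
  · intro g a x
    rw [mul_inv_rev, inv_inv, hσmul]
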